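/- For every positive integer n and every \pi \in DPP(n), the number of special entries s(\pi) equals the number of east steps among the paths of \Phi(\pi) whose right endpoint (m, h) satisfies 1 \le h \le m. -/

import Mathlib

/-- The entry of the array at row `r` (0-indexed) and position `p` within that row
(this is the entry in column `r + p`, 0-indexed, i.e. `π_{r+1, r+p+1}` in 1-indexed terms). -/
def entry? (rows : List (List ℕ)) (r p : ℕ) : Option ℕ :=
  rows[r]?.bind fun row => row[p]?

/-- `rows` is a `d`-descending plane partition with all entries ≤ `n`.
Row `i` (1-indexed) has `λ_i - i + 1` entries, so `λ_i = (length of row i) + i - 1`;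
the condition `λ_1 ≥ λ_2 ≥ ⋯ ≥ λ_k ≥ k` is equivalent to the row lengths being
strictly decreasing and all rows being nonempty. -/
def IsDPP (d : ℤ) (n : ℕ) (rows : List (List ℕ)) : Prop :=
  -- all rows nonempty (this is `λ_k ≥ k` for each row)
  (∀ row ∈ rows, row ≠ []) ∧
  -- entries are positive integers, at most n
  (∀ row ∈ rows, ∀ x ∈ row, 0 < x ∧ x ≤ n) ∧
  -- shape condition `λ_1 ≥ λ_2 ≥ ⋯`: row lengths strictly decrease
  rows.Chain' (fun a b => b.length < a.length) ∧
  -- entries weakly decrease along each row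
  (∀ row ∈ rows, row.Chain' (fun x y => y ≤ x)) ∧
  -- entries strictly decrease down each column: the entry at position `p` of a row is in
  -- the same column as the entry at position `p+1` of the preceding row
  rows.Chain' (fun a b => ∀ p x y, b[p]? = some x → a[p + 1]? = some y → x < y) ∧
  -- the first entry of each row is strictly greater than (number of entries in the row) - d
  (∀ row ∈ rows, ∀ x, row.head? = some x → (row.length : ℤ) - d < (x : ℤ)) ∧
  -- the first entry of each non-first row is at most (number of entries in previous row) - d
  rows.Chain' (fun a b => ∀ x, b.head? = some x → (x : ℤ) ≤ (a.length : ℤ) - d)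

/-- The entrywise order on descending plane partitions: `π ≤ σ` iff whenever an
entry of `π` exists, the corresponding entry of `σ` exists and is at least as large. -/
def dppLe (π σ : List (List ℕ)) : Prop :=
  ∀ r p x, entry? π r p = some x → ∃ y, entry? σ r p = some y ∧ x ≤ y

/-- `i(π)`: the total number of entries. -/
def numEntries (rows : List (List ℕ)) : ℕ := (rows.map List.length).sum

/-- `r(π)` (for the bound `n`): the number of entries equal to `n`. -/
def numEqual (n : ℕ) (rows : List (List ℕ)) : ℕ :=
  (rows.map fun row => row.count n).sum

/-- `s(π)`: the number of special entries, i.e. entries `π_{i,j}` with `π_{i,j} ≤ j - i`;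
in 0-indexed terms, the entry at position `p` of a row is special iff it is `≤ p`. -/
def numSpecial (rows : List (List ℕ)) : ℕ :=
  (rows.map fun row =>
    ((Finset.range row.length).filter fun p => row.getD p 0 ≤ p).card).sum

/-- A lattice path, given by its starting point and its list of steps:
`true` is an east step `(1,0)`, `false` is a south step `(0,-1)`. -/
structure LPath where
  start : ℤ × ℤ
  steps : List Bool

/-- The displacement vector of a step. -/
def stepVec (b : Bool) : ℤ × ℤ := if b then (1, 0) else (0, -1)

/-- The list of lattice points visited by a path. -/
def LPath.points (P : LPath) : List (ℤ × ℤ) :=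
  P.steps.scanl (fun p b => p + stepVec b) P.start

/-- The endpoint of a path. -/
def LPath.finish (P : LPath) : ℤ × ℤ :=
  P.steps.foldl (fun p b => p + stepVec b) P.start

/-- The starting points of the east steps of a path (an east step starting at `(x,y)`
has height `y` and right endpoint `(x+1, y)`). -/
def LPath.eastSteps (P : LPath) : List (ℤ × ℤ) :=
  ((P.points.zip P.steps).filter fun q => q.2).map Prod.fst

/-- A family of lattice paths is nonintersecting if no two paths share a lattice point. -/
def Nonintersecting (F : List LPath) : Prop :=
  F.Pairwise fun P Q => ∀ pt ∈ P.points, pt ∉ Q.points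

/-- `L(n)`: families `(P_1, …, P_k)` of pairwise nonintersecting lattice paths such that
for some `n ≥ h_1 > h_2 > ⋯ > h_k ≥ 2`, the path `P_i` runs from `(0, h_i)` to `(h_i - 2, 0)`. -/
def InL (n : ℕ) (F : List LPath) : Prop :=
  (∀ P ∈ F, ∃ h : ℤ, 2 ≤ h ∧ h ≤ (n : ℤ) ∧ P.start = (0, h) ∧ P.finish = (h - 2, 0)) ∧
  F.Chain' (fun P Q => Q.start.2 < P.start.2) ∧
  Nonintersecting F

/-- The steps of a path that starts at height `top` and takes its east steps at the
heights listed in `H` (weakly decreasing), ending at height `0`. -/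
def stepsFromHeights : ℕ → List ℕ → List Bool
  | top, [] => List.replicate top false
  | top, h :: t => List.replicate (top - h) false ++ true :: stepsFromHeights h t

/-- The path associated to a row `π_{i,i}, π_{i,i+1}, …, π_{i,λ_i}` of a descending plane
partition: it starts at `(0, π_{i,i})`, takes its east steps at the heights
`π_{i,i+1}, …, π_{i,λ_i}` in this order, then takes `π_{i,i} - 2 - (λ_i - i)` further east
steps at height `0`, ending at `(π_{i,i} - 2, 0)`. -/
def phiRow (row : List ℕ) : LPath :=
  match row with
  | [] => ⟨(0, 0), []⟩
  | a :: rest =>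
      ⟨((0 : ℤ), (a : ℤ)), stepsFromHeights a (rest ++ List.replicate (a - 2 - rest.length) 0)⟩

/-- The map `Φ` from descending plane partitions to families of lattice paths. -/
def Phi (rows : List (List ℕ)) : List LPath := rows.map phiRow

def gAux : ℤ → List ℕ → ℕ
  | _, [] => 0
  | x, h :: t => (if 1 ≤ (h : ℤ) ∧ (h : ℤ) ≤ x + 1 then 1 else 0) + gAux (x + 1) t

def sAux : ℕ → List ℕ → ℕ
  | _, [] => 0
  | x, h :: t => (if h ≤ x then 1 else 0) + sAux (x + 1) t

lemma eastSteps_nil (p : ℤ × ℤ) : (⟨p, []⟩ : LPath).eastSteps = [] := rfl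

lemma eastSteps_cons (p : ℤ × ℤ) (b : Bool) (s : List Bool) :
    (⟨p, b :: s⟩ : LPath).eastSteps =
      (if b then [p] else []) ++ (⟨p + stepVec b, s⟩ : LPath).eastSteps := by
  cases b <;> simp [LPath.eastSteps, LPath.points, List.scanl_cons]

lemma eastSteps_replicate_false (p : ℤ × ℤ) (m : ℕ) (s : List Bool) :
    (⟨p, List.replicate m false ++ s⟩ : LPath).eastSteps =
      (⟨(p.1, p.2 - m), s⟩ : LPath).eastSteps := by
  induction m generalizing p with
  | zero => simp
  | succ k ih =>
      rw [List.replicate_succ, List.cons_append, eastSteps_cons, ih]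
      simp [stepVec, Prod.ext_iff]
      ring_nf

lemma g_key (x : ℤ) (top : ℕ) (H : List ℕ)
    (hch : List.Chain' (fun a b => b ≤ a) (top :: H)) :
    ((⟨(x, (top : ℤ)), stepsFromHeights top H⟩ : LPath).eastSteps.countP
      fun pt => decide (1 ≤ pt.2 ∧ pt.2 ≤ pt.1 + 1)) = gAux x H := by
  induction H generalizing x top with
  | nil =>
      have : stepsFromHeights top [] = List.replicate top false ++ [] := by
        simp [stepsFromHeights]
      rw [this, eastSteps_replicate_false, eastSteps_nil]
      rfl
  | cons h t ih =>
      have hle : h ≤ top := (List.isChain_cons_cons.mp hch).1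
      have hch' : List.Chain' (fun a b => b ≤ a) (h :: t) := (List.isChain_cons_cons.mp hch).2
      rw [stepsFromHeights, eastSteps_replicate_false, eastSteps_cons]
      have hcast : ((top : ℤ), ((top : ℤ))).2 - ((top - h : ℕ) : ℤ) = (h : ℤ) := by
        push_cast [Nat.cast_sub hle]; ring
      have e1 : (((x, (top : ℤ)) : ℤ × ℤ).1, ((x, (top : ℤ)) : ℤ × ℤ).2 - ((top - h : ℕ) : ℤ))
          = (x, (h : ℤ)) := by
        simp [Nat.cast_sub hle]
      rw [e1]
      have e2 : ((x, (h : ℤ)) : ℤ × ℤ) + stepVec true = (x + 1, (h : ℤ)) := by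
        simp [stepVec, Prod.ext_iff]
      rw [e2]
      simp only [if_true, List.singleton_append, List.countP_cons, ih (x + 1) h hch', gAux,
        decide_eq_true_eq]
      by_cases hc : 1 ≤ (h : ℤ) ∧ (h : ℤ) ≤ x + 1 <;> simp [hc] <;> omega

lemma gAux_append (x : ℤ) (l l' : List ℕ) :
    gAux x (l ++ l') = gAux x l + gAux (x + l.length) l' := by
  induction l generalizing x with
  | nil => simp [gAux]
  | cons h t ih =>
      simp only [List.cons_append, List.append_eq, gAux, ih (x + 1), List.length_cons]
      push_cast
      have h2 : x + ((t.length : ℤ) + 1) = x + 1 + (t.length : ℤ) := by ring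
      rw [h2]
      omega

lemma gAux_replicate_zero (x : ℤ) (m : ℕ) : gAux x (List.replicate m 0) = 0 := by
  induction m generalizing x with
  | zero => rfl
  | succ k ih => simp [List.replicate_succ, gAux, ih]

lemma gAux_eq_sAux (x : ℕ) (l : List ℕ) (hpos : ∀ y ∈ l, 1 ≤ y) :
    gAux (x : ℤ) l = sAux (x + 1) l := by
  induction l generalizing x with
  | nil => rfl
  | cons h t ih =>
      have h1 : 1 ≤ h := hpos h (by simp)
      rw [gAux, sAux]
      have : ((x : ℤ) + 1) = ((x + 1 : ℕ) : ℤ) := by push_cast; ring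
      rw [this, ih (x + 1) (fun y hy => hpos y (by simp [hy]))]
      congr 1
      by_cases hc : h ≤ x + 1
      · rw [if_pos, if_pos hc]
        constructor
        · exact_mod_cast h1
        · exact_mod_cast hc
      · rw [if_neg, if_neg hc]
        intro ⟨_, h2⟩
        exact hc (by exact_mod_cast h2)

lemma countP_range_eq_sAux (l : List ℕ) (x : ℕ) :
    ((List.range l.length).countP fun p => decide (l.getD p 0 ≤ x + p)) = sAux x l := by
  induction l generalizing x with
  | nil => rfl
  | cons h t ih =>
      rw [List.length_cons, List.range_succ_eq_map, List.countP_cons, List.countP_map]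
      have : ((fun p => decide ((h :: t).getD p 0 ≤ x + p)) ∘ Nat.succ)
          = fun p => decide (t.getD p 0 ≤ (x + 1) + p) := by
        funext p
        simp [Nat.succ_eq_add_one]
        omega
      rw [this, ih (x + 1), sAux]
      simp [Nat.add_comm]

lemma filter_card_eq_countP (n : ℕ) (p : ℕ → Prop) [DecidablePred p] :
    ((Finset.range n).filter p).card = (List.range n).countP fun a => decide (p a) := by
  simp [Finset.card, Finset.filter, Finset.range, Multiset.range,
    Multiset.filter_coe, List.countP_eq_length_filter]

lemma chain'_replicate_zero (m : ℕ) :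
    List.Chain' (fun a b : ℕ => b ≤ a) (List.replicate m 0) := by
  induction m with
  | zero => exact List.isChain_nil
  | succ k ih =>
      cases k with
      | zero => exact List.isChain_singleton 0
      | succ j =>
          rw [List.replicate_succ]
          exact List.isChain_cons_cons.mpr ⟨by simp [List.replicate_succ], ih⟩

lemma row_key (a : ℕ) (rest : List ℕ)
    (hpos : ∀ y ∈ a :: rest, 1 ≤ y)
    (hchain : (a :: rest).Chain' (fun x y => y ≤ x)) :
    ((Finset.range (a :: rest).length).filter fun p => (a :: rest).getD p 0 ≤ p).card
      = ((phiRow (a :: rest)).eastSteps.countP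
          fun pt => decide (1 ≤ pt.2 ∧ pt.2 ≤ pt.1 + 1)) := by
  have ha : 1 ≤ a := hpos a (by simp)
  set m := a - 2 - rest.length with hm
  -- LHS
  rw [filter_card_eq_countP]
  have hL : ((List.range (a :: rest).length).countP fun p => decide ((a :: rest).getD p 0 ≤ p))
      = sAux 0 (a :: rest) := by
    have := countP_range_eq_sAux (a :: rest) 0
    simpa using this
  rw [hL, sAux, if_neg (by omega)]
  -- RHS
  have hchH : List.Chain' (fun x y : ℕ => y ≤ x)
      (a :: (rest ++ List.replicate m 0)) := by
    rw [← List.cons_append]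
    refine List.isChain_append.mpr ⟨hchain, chain'_replicate_zero m, ?_⟩
    intro x _ y hy
    have : y = 0 := List.eq_of_mem_replicate (List.mem_of_mem_head? hy)
    omega
  rw [phiRow]
  rw [g_key 0 a (rest ++ List.replicate m 0) hchH]
  rw [gAux_append, gAux_replicate_zero]
  have : gAux (0 : ℤ) rest = gAux ((0 : ℕ) : ℤ) rest := by norm_num
  rw [this, gAux_eq_sAux 0 rest (fun y hy => hpos y (by simp [hy]))]
  omega


/-- For every `π ∈ DPP(n)`, the number of special entries `s(π)` equals the number of
east steps among the paths of `Φ(π)` whose right endpoint `(m, h)` satisfies `1 ≤ h ≤ m`.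
(An east step starting at `pt` has right endpoint `(pt.1 + 1, pt.2)`.) -/
theorem stmt3 (n : ℕ) (hn : 0 < n) (rows : List (List ℕ)) (h : IsDPP 0 n rows) :
    numSpecial rows =
      ((Phi rows).map fun P =>
        P.eastSteps.countP fun pt => decide (1 ≤ pt.2 ∧ pt.2 ≤ pt.1 + 1)).sum := by
  unfold numSpecial Phi
  rw [List.map_map, List.map_congr_left]
  intro row hrow
  obtain ⟨hne, hposn, _, hchain, _⟩ := h
  cases row with
  | nil => exact absurd rfl (hne [] hrow)
  | cons a rest =>
      exact row_key a rest
        (fun y hy => (hposn _ hrow y hy).1)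
        (hchain _ hrow)
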